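/- If {n_0,...,n_p} is a compound sequence, then for each i in [1,p], a_i = n_{i-1}/gcd(n_{i-1}, n_i) and b_i = n_i/gcd(n_{i-1}, n_i). -/

import Mathlib

theorem stmt6 (p : ℕ) (hp : 1 ≤ p) (a b : ℕ → ℕ)
    (ha : ∀ i, 1 ≤ i → i ≤ p → 2 ≤ a i ∧ a i < b i)
    (hab : ∀ i j, 1 ≤ j → j ≤ i → i ≤ p → Nat.gcd (a i) (b j) = 1)
    (n : ℕ → ℕ)
    (hn : ∀ i, i ≤ p → n i = (∏ j ∈ Finset.Icc 1 i, b j) * ∏ j ∈ Finset.Icc (i+1) p, a j)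
    (i : ℕ) (hi1 : 1 ≤ i) (hip : i ≤ p) :
    a i = n (i-1) / Nat.gcd (n (i-1)) (n i) ∧
    b i = n i / Nat.gcd (n (i-1)) (n i) := by
  set B := ∏ j ∈ Finset.Icc 1 (i-1), b j with hB
  set A := ∏ j ∈ Finset.Icc (i+1) p, a j with hA
  have hi : i - 1 + 1 = i := Nat.succ_pred_eq_of_pos hi1
  have hn1 : n (i-1) = B * A * a i := by
    rw [hn (i-1) (le_trans (Nat.sub_le _ _) hip), hi]
    have : (∏ j ∈ Finset.Icc i p, a j) = a i * A := by
      rw [← Finset.Ico_add_one_right_eq_Icc, Finset.prod_eq_prod_Ico_succ_bot (show i < p + 1 from Nat.lt_succ_of_le hip),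
        Finset.Ico_add_one_right_eq_Icc]
    rw [this]; ring
  have hn2 : n i = B * A * b i := by
    rw [hn i hip, ← hi, Finset.prod_Icc_succ_top (by omega), hi]
    ring
  have hBA : 0 < B * A := by
    apply Nat.mul_pos
    · apply Finset.prod_pos
      intro j hj
      simp only [Finset.mem_Icc] at hj
      have := ha j hj.1 (by omega)
      omega
    · apply Finset.prod_pos
      intro j hj
      simp only [Finset.mem_Icc] at hj
      have := ha j (by omega) hj.2
      omega
  have hg : Nat.gcd (n (i-1)) (n i) = B * A := by
    rw [hn1, hn2, Nat.gcd_mul_left, hab i i hi1 le_rfl hip, mul_one]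
  rw [hg, hn1, hn2, Nat.mul_div_cancel_left _ hBA, Nat.mul_div_cancel_left _ hBA]
  exact ⟨rfl, rfl⟩
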